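/- arXiv:1102.0036 — 3 statements merged into one kernel-verified Lean document; each statement's English description precedes it below -/
import Mathlib

section
/- For every L(λ) ∈ T_λ, every x(λ) ∈ ⊕_{i<0} g̃_i, every y(λ) ∈ ⊕_{i≥|β|+1} g̃_i, and every w(λ) ∈ g̃, one has ⟨L(λ), [y(λ), w(λ)₊] − [x(λ), w(λ)₋]⟩_λ = 0, where w(λ)₊ and w(λ)₋ denote the projections of w(λ) onto g̃₊ = ⊕_{i≥0} g̃_i and g̃₋ = ⊕_{i<0} g̃_i respectively. (This is the key computation showing that the ideal of polynomial functions vanishing on T_λ is a Poisson ideal for the R-matrix bracket, so that T_λ inherits a Poisson structure.) -/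
namespace PeriodicFullKostantToda

variable {g : Type} [LieRing g] [LieAlgebra ℂ g]

/-- The Lie bracket of the loop algebra `g̃ = 𝔤 ⊗ ℂ[λ,λ⁻¹]`, modelled on `ℤ →₀ 𝔤`
(`x k` is the coefficient of `λ^k`). -/
noncomputable def loopBracket (x y : ℤ →₀ g) : ℤ →₀ g :=
  x.sum fun i xi => y.sum fun j yj => Finsupp.single (i + j) ⁅xi, yj⁆

/-- The degree-`i` component `g̃ᵢ` of the loop algebra, for the grading in which `λ^k e_α`
has degree `|α| + (N+1)k`, where `N = |β|` and `gr` is the height grading of `𝔤`. -/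
def loopGrade (gr : ℤ → Submodule ℂ g) (N : ℤ) (i : ℤ) : Submodule ℂ (ℤ →₀ g) where
  carrier := {x | ∀ k : ℤ, x k ∈ gr (i - (N + 1) * k)}
  add_mem' := fun hx hy k => by
    simpa using (gr _).add_mem (hx k) (hy k)
  zero_mem' := fun k => by simp
  smul_mem' := fun c x hx k => by
    simpa using (gr _).smul_mem c (hx k)

/-- The bilinear form `⟨X(λ),Y(λ)⟩_λ := ∑_{k∈ℤ} ⟨X_k, Y_{−k}⟩` on the loop algebra,
where `⟨·,·⟩` is the Killing form of `𝔤`. -/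
noncomputable def loopForm [Module.Finite ℂ g] (x y : ℤ →₀ g) : ℂ :=
  x.sum fun k xk => killingForm ℂ g xk (y (-k))

/-- Span of the graded pieces `gr i` over all `i` satisfying `P`. -/
def S (gr : ℤ → Submodule ℂ g) (P : ℤ → Prop) : Submodule ℂ g :=
  ⨆ (i : ℤ) (_ : P i), gr i

lemma mem_S_of (gr : ℤ → Submodule ℂ g) {P : ℤ → Prop} {i : ℤ} (hi : P i)
    {u : g} (hu : u ∈ gr i) : u ∈ S gr P :=
  Submodule.mem_iSup_of_mem i (Submodule.mem_iSup_of_mem hi hu)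

lemma iSup_induction' {M : Type*} [AddCommMonoid M] [Module ℂ M]
    {p : ℤ → Submodule ℂ M} {P : ℤ → Prop} {u : M}
    (hu : u ∈ ⨆ (i : ℤ) (_ : P i), p i) {C : M → Prop}
    (helem : ∀ i, P i → ∀ v ∈ p i, C v) (h0 : C 0)
    (hadd : ∀ a b, C a → C b → C (a + b)) : C u := by
  refine Submodule.iSup_induction (motive := C) _ hu ?_ h0 hadd
  intro i v hv
  by_cases hi : P i
  · simp only [hi, iSup_pos] at hv
    exact helem i hi v hv
  · rw [iSup_neg hi, Submodule.mem_bot] at hv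
    rw [hv]; exact h0

lemma S_bracket (gr : ℤ → Submodule ℂ g)
    (hbrack : ∀ i j : ℤ, ∀ x ∈ gr i, ∀ y ∈ gr j, ⁅x, y⁆ ∈ gr (i + j))
    {P Q R : ℤ → Prop} (hPQ : ∀ i j, P i → Q j → R (i + j))
    {u v : g} (hu : u ∈ S gr P) (hv : v ∈ S gr Q) : ⁅u, v⁆ ∈ S gr R := by
  refine iSup_induction' hu (C := fun u => ⁅u, v⁆ ∈ S gr R) ?_ (by simp) ?_
  · intro i hi a ha
    refine iSup_induction' hv (C := fun v => ⁅a, v⁆ ∈ S gr R) ?_ (by simp) ?_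
    · intro j hj b hb
      exact mem_S_of gr (hPQ i j hi hj) (hbrack i j a ha b hb)
    · intro c d hc hd
      rw [lie_add]; exact (S gr R).add_mem hc hd
  · intro a b hab hbb
    rw [add_lie]; exact (S gr R).add_mem hab hbb

lemma S_orth [Module.Finite ℂ g] (gr : ℤ → Submodule ℂ g)
    (horth : ∀ k l : ℤ, k + l ≠ 0 → ∀ x ∈ gr k, ∀ y ∈ gr l, killingForm ℂ g x y = 0)
    {P Q : ℤ → Prop} (hPQ : ∀ i j, P i → Q j → i + j ≠ 0)
    {u v : g} (hu : u ∈ S gr P) (hv : v ∈ S gr Q) : killingForm ℂ g u v = 0 := by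
  refine iSup_induction' hu (C := fun u => killingForm ℂ g u v = 0) ?_ (by simp) ?_
  · intro i hi a ha
    refine iSup_induction' hv (C := fun v => killingForm ℂ g a v = 0) ?_ (by simp) ?_
    · intro j hj b hb
      exact horth i j (hPQ i j hi hj) a ha b hb
    · intro c d hc hd
      rw [map_add, hc, hd, add_zero]
  · intro a b hab hbb
    rw [map_add, LinearMap.add_apply, hab, hbb, add_zero]

lemma coeff_mem (gr : ℤ → Submodule ℂ g) (N : ℤ) {P : ℤ → Prop} {z : ℤ →₀ g}
    (hz : z ∈ ⨆ (i : ℤ) (_ : P i), loopGrade gr N i) (k : ℤ) :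
    z k ∈ S gr (fun d => ∃ i, P i ∧ d = i - (N + 1) * k) := by
  refine iSup_induction' hz
    (C := fun z => z k ∈ S gr (fun d => ∃ i, P i ∧ d = i - (N + 1) * k)) ?_ (by simp) ?_
  · intro i hi v hv
    exact mem_S_of gr ⟨i, hi, rfl⟩ (hv k)
  · intro a b ha hb
    rw [Finsupp.add_apply]; exact (S gr _).add_mem ha hb

lemma bracket_coeff_mem (gr : ℤ → Submodule ℂ g) (N : ℤ)
    (hbrack : ∀ i j : ℤ, ∀ x ∈ gr i, ∀ y ∈ gr j, ⁅x, y⁆ ∈ gr (i + j))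
    {A B AB : ℤ → Prop} (hABc : ∀ a b, A a → B b → AB (a + b))
    {x y : ℤ →₀ g}
    (hx : ∀ k, x k ∈ S gr (fun d => ∃ c, A c ∧ d = c - (N + 1) * k))
    (hy : ∀ k, y k ∈ S gr (fun d => ∃ c, B c ∧ d = c - (N + 1) * k))
    (m : ℤ) :
    loopBracket x y m ∈ S gr (fun d => ∃ c, AB c ∧ d = c - (N + 1) * m) := by
  rw [loopBracket, Finsupp.sum_apply]
  apply Submodule.finsuppSum_mem
  intro i _
  rw [Finsupp.sum_apply]
  apply Submodule.finsuppSum_mem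
  intro j _
  rw [Finsupp.single_apply]
  split
  · next heq =>
    refine S_bracket gr hbrack ?_ (hx i) (hy j)
    rintro d1 d2 ⟨a, hA, rfl⟩ ⟨b, hB, rfl⟩
    exact ⟨a + b, hABc a b hA hB, by rw [← heq]; ring⟩
  · simp

/-- For every `L(λ) ∈ T_λ`, every `x(λ) ∈ ⊕_{i<0} g̃ᵢ`, every `y(λ) ∈ ⊕_{i≥N+1} g̃ᵢ`
(`N = |β|`), and every `w(λ) ∈ g̃`, one has
`⟨L(λ), [y(λ), w(λ)₊] − [x(λ), w(λ)₋]⟩_λ = 0`, where `w(λ) = w(λ)₊ + w(λ)₋` is the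
decomposition of `w(λ)` with `w(λ)₊ ∈ g̃₊ = ⊕_{i≥0} g̃ᵢ` and `w(λ)₋ ∈ g̃₋ = ⊕_{i<0} g̃ᵢ`.
Here `T_λ = ⊕_{−N ≤ i ≤ 0} g̃ᵢ + f` with `f = ∑ᵢ eᵢ + λ e_{−β}`, where
`E := ∑ᵢ eᵢ ∈ 𝔤₁` and `Fβ := e_{−β} ∈ 𝔤_{−N}`. -/
theorem stmt4 [FiniteDimensional ℂ g] [LieAlgebra.IsSimple ℂ g]
    (gr : ℤ → Submodule ℂ g) (N : ℤ) (hN : 1 ≤ N)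
    (hinternal : DirectSum.IsInternal gr)
    (hsupp : ∀ m : ℤ, N < |m| → gr m = ⊥)
    (hbrack : ∀ i j : ℤ, ∀ x ∈ gr i, ∀ y ∈ gr j, ⁅x, y⁆ ∈ gr (i + j))
    (horth : ∀ k l : ℤ, k + l ≠ 0 → ∀ x ∈ gr k, ∀ y ∈ gr l, killingForm ℂ g x y = 0)
    (E : g) (hE : E ∈ gr 1) (Fβ : g) (hFβ : Fβ ∈ gr (-N))
    (L L₀ : ℤ →₀ g)
    (hL₀ : L₀ ∈ ⨆ (i : ℤ) (_ : -N ≤ i ∧ i ≤ 0), loopGrade gr N i)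
    (hL : L = L₀ + (Finsupp.single 0 E + Finsupp.single 1 Fβ))
    (x : ℤ →₀ g) (hx : x ∈ ⨆ (i : ℤ) (_ : i < 0), loopGrade gr N i)
    (y : ℤ →₀ g) (hy : y ∈ ⨆ (i : ℤ) (_ : N + 1 ≤ i), loopGrade gr N i)
    (w wp wn : ℤ →₀ g)
    (hwp : wp ∈ ⨆ (i : ℤ) (_ : 0 ≤ i), loopGrade gr N i)
    (hwn : wn ∈ ⨆ (i : ℤ) (_ : i < 0), loopGrade gr N i)
    (hw : w = wp + wn) :
    loopForm L (loopBracket y wp - loopBracket x wn) = 0 := by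
  -- coefficients of L lie in degrees i - (N+1)k with -N ≤ i ≤ 1
  have hLk : ∀ k : ℤ, L k ∈ S gr (fun d => ∃ i, (-N ≤ i ∧ i ≤ 1) ∧ d = i - (N + 1) * k) := by
    intro k
    rw [hL]
    simp only [Finsupp.add_apply]
    refine (S gr _).add_mem ?_ ((S gr _).add_mem ?_ ?_)
    · have h0 := coeff_mem gr N hL₀ k
      refine iSup_induction' (p := gr) (hu := h0)
        (C := fun u => u ∈ S gr (fun d => ∃ i, (-N ≤ i ∧ i ≤ 1) ∧ d = i - (N + 1) * k))
        ?_ (by simp) (fun a b ha hb => (S gr _).add_mem ha hb)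
      rintro d ⟨i, ⟨hi1, hi2⟩, rfl⟩ v hv
      exact mem_S_of gr ⟨i, ⟨hi1, by omega⟩, rfl⟩ hv
    · rw [Finsupp.single_apply]
      split
      · next heq => exact mem_S_of gr ⟨1, ⟨by omega, le_refl 1⟩, by rw [← heq]; ring⟩ hE
      · simp
    · rw [Finsupp.single_apply]
      split
      · next heq => exact mem_S_of gr ⟨1, ⟨by omega, le_refl 1⟩, by rw [← heq]; ring⟩ hFβ
      · simp
  -- coefficients of [y, wp]
  have hB1 : ∀ m : ℤ, loopBracket y wp m ∈
      S gr (fun d => ∃ c, N + 1 ≤ c ∧ d = c - (N + 1) * m) := by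
    intro m
    exact bracket_coeff_mem gr N hbrack (A := fun c => N + 1 ≤ c) (B := fun c => 0 ≤ c)
      (AB := fun c => N + 1 ≤ c) (fun a b ha hb => by omega)
      (coeff_mem gr N hy) (coeff_mem gr N hwp) m
  -- coefficients of [x, wn]
  have hB2 : ∀ m : ℤ, loopBracket x wn m ∈
      S gr (fun d => ∃ c, c ≤ -2 ∧ d = c - (N + 1) * m) := by
    intro m
    exact bracket_coeff_mem gr N hbrack (A := fun c => c < 0) (B := fun c => c < 0)
      (AB := fun c => c ≤ -2) (fun a b ha hb => by omega)
      (coeff_mem gr N hx) (coeff_mem gr N hwn) m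
  rw [loopForm, Finsupp.sum]
  refine Finset.sum_eq_zero fun k _ => ?_
  rw [Finsupp.sub_apply, map_sub]
  have h1 : killingForm ℂ g (L k) (loopBracket y wp (-k)) = 0 := by
    refine S_orth gr horth ?_ (hLk k) (hB1 (-k))
    rintro d1 d2 ⟨i, ⟨hi1, hi2⟩, rfl⟩ ⟨c, hc, rfl⟩
    have h : i - (N + 1) * k + (c - (N + 1) * (-k)) = i + c := by ring
    rw [h]; omega
  have h2 : killingForm ℂ g (L k) (loopBracket x wn (-k)) = 0 := by
    refine S_orth gr horth ?_ (hLk k) (hB2 (-k))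
    rintro d1 d2 ⟨i, ⟨hi1, hi2⟩, rfl⟩ ⟨c, hc, rfl⟩
    have h : i - (N + 1) * k + (c - (N + 1) * (-k)) = i + c := by ring
    rw [h]; omega
  rw [h1, h2, sub_zero]

end PeriodicFullKostantToda
end

section
/- Let P be a homogeneous ad-invariant polynomial function on 𝔤 of degree m+1, let p, q ∈ ℕ, i₁,…,i_p ∈ {1,…,ℓ}, and γ₁,…,γ_q ∈ Φ. If m + 1 − (p+q) + Σ_{a=1}^{q} |γ_a| < 0 or Σ_{a=1}^{q} |γ_a| > 0, then for every y ∈ 𝔥 ⊕ 𝔤₁ the (p+q)-th differential of P at y satisfies d^{p+q}_y P(h_{i₁},…,h_{i_p}, e_{γ₁},…,e_{γ_q}) = 0. -/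
open MvPolynomial

namespace PeriodicFullKostantToda

/-- Coefficient of a partial derivative. -/
lemma coeff_pderiv_aux {σ : Type} [DecidableEq σ] (i : σ) (f : MvPolynomial σ ℂ) (k : σ →₀ ℕ) :
    MvPolynomial.coeff k (MvPolynomial.pderiv i f)
      = ((k i + 1 : ℕ) : ℂ) * MvPolynomial.coeff (k + Finsupp.single i 1) f := by
  induction f using MvPolynomial.induction_on' with
  | add p q hp hq => simp [hp, hq, mul_add]
  | monomial u a =>
    simp only [pderiv_monomial, coeff_monomial]
    by_cases h : u = k + Finsupp.single i 1
    · subst h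
      have h1 : k + Finsupp.single i 1 - Finsupp.single i 1 = k := by
        ext j; by_cases hj : j = i <;> simp [Finsupp.single_apply, hj]
      have h2 : ((k + Finsupp.single i 1 : (σ →₀ ℕ))) i = k i + 1 := by simp
      rw [if_pos h1, h2, if_pos rfl]
      push_cast; ring
    · rw [if_neg h, mul_zero]
      by_cases h0 : u i = 0
      · by_cases h2 : u - Finsupp.single i 1 = k <;> simp [h2, h0]
      · have hne : u - Finsupp.single i 1 ≠ k := by
          intro hk
          apply h
          rw [← hk]
          ext j
          by_cases hj : j = i
          · subst hj; simp [Nat.sub_add_cancel (Nat.one_le_iff_ne_zero.mpr h0)]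
          · simp [Finsupp.single_apply, Ne.symm hj]
        simp [hne]


/-- Iterated partial derivative along a list of variables (first element applied first). -/
noncomputable def DL {σ : Type} [DecidableEq σ] (L : List σ) (f : MvPolynomial σ ℂ) :
    MvPolynomial σ ℂ :=
  L.foldl (fun g i => MvPolynomial.pderiv i g) f

@[simp] lemma DL_nil {σ : Type} [DecidableEq σ] (f : MvPolynomial σ ℂ) : DL [] f = f := rfl

@[simp] lemma DL_cons {σ : Type} [DecidableEq σ] (i : σ) (L : List σ) (f : MvPolynomial σ ℂ) :
    DL (i :: L) f = DL L (MvPolynomial.pderiv i f) := rfl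

lemma DL_C_mul {σ : Type} [DecidableEq σ] (L : List σ) (c : ℂ) (f : MvPolynomial σ ℂ) :
    DL L (MvPolynomial.C c * f) = MvPolynomial.C c * DL L f := by
  induction L generalizing f with
  | nil => rfl
  | cons i L ih => simp [MvPolynomial.pderiv_C_mul, ih]

lemma DL_sum {σ ι : Type} [DecidableEq σ] (L : List σ) (s : Finset ι)
    (F : ι → MvPolynomial σ ℂ) :
    DL L (∑ i ∈ s, F i) = ∑ i ∈ s, DL L (F i) := by
  induction L generalizing F with
  | nil => rfl
  | cons j L ih => simp [map_sum, ih]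

lemma coeff_DL {σ : Type} [DecidableEq σ] (L : List σ) (hL : L.Nodup) (f : MvPolynomial σ ℂ)
    (k : σ →₀ ℕ) (hk : ∀ i ∈ L, k i = 0) :
    MvPolynomial.coeff k (DL L f)
      = MvPolynomial.coeff (k + (L.map (fun i => Finsupp.single i 1)).sum) f := by
  induction L generalizing f k with
  | nil => simp
  | cons i L ih =>
    have hnd := List.nodup_cons.mp hL
    have hki : k i = 0 := hk i (by simp)
    rw [DL_cons, ih hnd.2 _ _ (fun j hj => hk j (by simp [hj])), coeff_pderiv_aux]
    have hSi : ((L.map (fun i => Finsupp.single i 1)).sum : σ →₀ ℕ) i = 0 := by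
      clear ih hk hL
      induction L with
      | nil => simp
      | cons j L ihl =>
        have : i ∉ L := fun h => hnd.1 (by simp [h])
        have hji : ¬ j = i := fun h => hnd.1 (by simp [h])
        simp only [List.map_cons, List.sum_cons, Finsupp.add_apply]
        rw [ihl ⟨fun h => hnd.1 (by simp [h]), hnd.2.of_cons⟩]
        simp [Finsupp.single_apply, hji]
    have h1 : ((k + (L.map (fun i => Finsupp.single i 1)).sum : (σ →₀ ℕ))) i = 0 := by
      simp [Finsupp.add_apply, hki, hSi]
    rw [h1]
    simp only [List.map_cons, List.sum_cons]
    ring_nf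
    congr 1
    abel

lemma aeval_eq_eval_c {τ : Type} (t : τ → ℂ) (g : MvPolynomial τ ℂ) :
    MvPolynomial.aeval t g = MvPolynomial.eval t g := by
  rw [← MvPolynomial.coe_aeval_eq_eval]; rfl

lemma eval_aeval_apply {σ τ : Type} (t : τ → ℂ) (A : σ → MvPolynomial τ ℂ)
    (f : MvPolynomial σ ℂ) :
    MvPolynomial.eval t (MvPolynomial.aeval A f)
      = MvPolynomial.eval (fun s => MvPolynomial.eval t (A s)) f := by
  rw [← aeval_eq_eval_c, MvPolynomial.comp_aeval_apply]
  simp only [aeval_eq_eval_c]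

lemma eval_zero_eq_coeff_zero {τ : Type} (f : MvPolynomial τ ℂ) :
    MvPolynomial.eval (0 : τ → ℂ) f = MvPolynomial.coeff 0 f := by
  simp only [MvPolynomial.eval_zero, MvPolynomial.constantCoeff_eq]

/-- Chain rule for `pderiv` of `aeval`. -/
lemma pderiv_aeval {σ τ : Type} [Fintype σ] [DecidableEq σ] [DecidableEq τ]
    (A : σ → MvPolynomial τ ℂ) (j : τ) (f : MvPolynomial σ ℂ) :
    MvPolynomial.pderiv j (MvPolynomial.aeval A f)
      = ∑ s : σ, MvPolynomial.aeval A (MvPolynomial.pderiv s f) * MvPolynomial.pderiv j (A s) := by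
  induction f using MvPolynomial.induction_on with
  | C a => simp
  | add p q hp hq =>
    simp only [map_add, hp, hq, add_mul, ← Finset.sum_add_distrib]
  | mul_X p s₀ ih =>
    rw [map_mul, MvPolynomial.aeval_X, MvPolynomial.pderiv_mul, ih]
    have hrhs : ∀ s : σ,
        MvPolynomial.aeval A (MvPolynomial.pderiv s (p * MvPolynomial.X s₀))
            * MvPolynomial.pderiv j (A s)
          = MvPolynomial.aeval A (MvPolynomial.pderiv s p) * A s₀ * MvPolynomial.pderiv j (A s)
            + (if s = s₀ then MvPolynomial.aeval A p * MvPolynomial.pderiv j (A s) else 0) := by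
      intro s
      rw [MvPolynomial.pderiv_mul, map_add, map_mul, MvPolynomial.aeval_X, add_mul]
      congr 1
      by_cases hs : s = s₀
      · subst hs; simp
      · simp [MvPolynomial.pderiv_X_of_ne (Ne.symm hs), hs]
    rw [Finset.sum_congr rfl (fun s _ => hrhs s), Finset.sum_add_distrib,
      Finset.sum_ite_eq' Finset.univ s₀, if_pos (Finset.mem_univ s₀), Finset.sum_mul]
    rw [add_left_inj]
    exact Finset.sum_congr rfl fun s _ => by ring


/-- Main vanishing lemma: iterated derivatives of a substituted isobaric polynomial,
evaluated at `0`, vanish under a weight/degree mismatch. -/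
lemma main_vanish {σ τ : Type} [Fintype σ] [DecidableEq σ] [Fintype τ] [DecidableEq τ]
    (w : σ → ℤ) (z : σ → ℂ) (B : τ → σ → ℂ) (c : τ → ℤ)
    (hz : ∀ s, z s ≠ 0 → w s = 0 ∨ w s = 1)
    (hB : ∀ j s, B j s ≠ 0 → w s = c j) :
    ∀ (L : List τ) (f : MvPolynomial σ ℂ) (d W : ℤ),
      (∀ k : σ →₀ ℕ, MvPolynomial.coeff k f ≠ 0 →
        (∑ s : σ, (k s : ℤ)) = d ∧ (∑ s : σ, w s * (k s : ℤ)) = W) →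
      (W - (L.map c).sum < 0 ∨ d - L.length < W - (L.map c).sum) →
      MvPolynomial.eval (0 : τ → ℂ)
        (DL L (MvPolynomial.aeval
          (fun s => MvPolynomial.C (z s) + ∑ j : τ, MvPolynomial.C (B j s) * MvPolynomial.X j)
          f)) = 0 := by
  intro L
  induction L with
  | nil =>
    intro f d W hmono hcond
    rw [DL_nil, eval_aeval_apply]
    have hA0 : (fun s => MvPolynomial.eval (0 : τ → ℂ)
        (MvPolynomial.C (z s) + ∑ j : τ, MvPolynomial.C (B j s) * MvPolynomial.X j)) = z := by
      funext s
      simp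
    rw [hA0, MvPolynomial.eval_eq]
    apply Finset.sum_eq_zero
    intro k hk
    obtain ⟨hd, hW⟩ := hmono k (MvPolynomial.mem_support_iff.mp hk)
    by_cases hzall : ∀ s ∈ k.support, z s ≠ 0
    · exfalso
      have hw01 : ∀ s ∈ k.support, w s = 0 ∨ w s = 1 := fun s hs => hz s (hzall s hs)
      have hWsupp : W = ∑ s ∈ k.support, w s * (k s : ℤ) := by
        rw [← hW]
        exact (Finset.sum_subset (Finset.subset_univ _)
          (fun s _ hs => by
            simp [Finsupp.notMem_support_iff.mp hs])).symm
      have hdsupp : d = ∑ s ∈ k.support, (k s : ℤ) := by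
        rw [← hd]
        exact (Finset.sum_subset (Finset.subset_univ _)
          (fun s _ hs => by
            simp [Finsupp.notMem_support_iff.mp hs])).symm
      have hW0 : 0 ≤ W := by
        rw [hWsupp]
        apply Finset.sum_nonneg
        intro s hs
        rcases hw01 s hs with h | h <;> simp [h]
      have hWd : W ≤ d := by
        rw [hWsupp, hdsupp]
        apply Finset.sum_le_sum
        intro s hs
        rcases hw01 s hs with h | h <;> simp [h]
      simp only [List.map_nil, List.sum_nil, List.length_nil, sub_zero] at hcond
      rcases hcond with h | h
      · omega
      · push_cast at h; omega
    · push_neg at hzall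
      obtain ⟨s, hs, hzs⟩ := hzall
      rw [Finset.prod_eq_zero hs, mul_zero]
      rw [hzs]
      exact zero_pow (Finsupp.mem_support_iff.mp hs)
  | cons j L ih =>
    intro f d W hmono hcond
    rw [DL_cons, pderiv_aeval]
    have hpdA : ∀ s : σ, MvPolynomial.pderiv j
        (MvPolynomial.C (z s) + ∑ j' : τ, MvPolynomial.C (B j' s) * MvPolynomial.X j')
          = MvPolynomial.C (B j s) := by
      intro s
      rw [map_add, MvPolynomial.pderiv_C, zero_add, map_sum]
      rw [Finset.sum_congr rfl (fun j' _ => MvPolynomial.pderiv_C_mul)]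
      rw [Finset.sum_congr rfl (fun j' _ => by rw [MvPolynomial.pderiv_X])]
      rw [Finset.sum_eq_single j (fun j' _ hne => by
          rw [Pi.single_eq_of_ne hne, mul_zero])
        (fun h => absurd (Finset.mem_univ j) h)]
      rw [Pi.single_eq_same, mul_one]
    rw [Finset.sum_congr rfl (fun s _ => by rw [hpdA s, mul_comm])]
    rw [DL_sum, map_sum]
    apply Finset.sum_eq_zero
    intro s _
    rw [DL_C_mul, map_mul, MvPolynomial.eval_C]
    by_cases hBjs : B j s = 0
    · rw [hBjs, zero_mul]
    · rw [ih (MvPolynomial.pderiv s f) (d - 1) (W - w s) ?_ ?_, mul_zero]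
      · -- monomial condition for the derivative
        intro k hkne
        rw [coeff_pderiv_aux] at hkne
        have hcoeff : MvPolynomial.coeff (k + Finsupp.single s 1) f ≠ 0 :=
          fun h => hkne (by rw [h, mul_zero])
        obtain ⟨hd, hW⟩ := hmono _ hcoeff
        have happ : ∀ u : σ, (((k + Finsupp.single s 1 : (σ →₀ ℕ))) u : ℤ)
            = (k u : ℤ) + (if u = s then 1 else 0) := by
          intro u
          simp only [Finsupp.add_apply, Finsupp.single_apply]
          by_cases hu : u = s
          · subst hu; simp
          · simp [hu, Ne.symm hu]
        constructor
        · have : (∑ u : σ, ((k u : ℤ) + (if u = s then 1 else 0))) = d := by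
            rw [← hd]
            exact (Finset.sum_congr rfl fun u _ => (happ u).symm)
          rw [Finset.sum_add_distrib, Finset.sum_ite_eq' Finset.univ s,
            if_pos (Finset.mem_univ s)] at this
          omega
        · have : (∑ u : σ, w u * ((k u : ℤ) + (if u = s then 1 else 0))) = W := by
            rw [← hW]
            exact (Finset.sum_congr rfl fun u _ => by rw [happ u])
          have hsplit : (∑ u : σ, w u * ((k u : ℤ) + (if u = s then 1 else 0)))
              = (∑ u : σ, w u * (k u : ℤ)) + ∑ u : σ, (if u = s then w u else 0) := by
            rw [← Finset.sum_add_distrib]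
            exact Finset.sum_congr rfl fun u _ => by
              by_cases hu : u = s <;> simp [hu, mul_add]
          rw [hsplit, Finset.sum_ite_eq' Finset.univ s, if_pos (Finset.mem_univ s)] at this
          omega
      · -- arithmetic condition
        have hws : w s = c j := hB j s hBjs
        simp only [List.map_cons, List.sum_cons, List.length_cons] at hcond
        rcases hcond with h | h
        · left; omega
        · right; push_cast at h ⊢; omega

/-- Context as in the paper: `𝔤` a finite-dimensional complex simple Lie algebra of rank `ℓ`,
with simple coroots `h₁,…,h_ℓ` (spanning the Cartan subalgebra `𝔥`), root system `Φ` with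
height function `ht`, root negation `negr`, and root vectors `e_γ`; `𝔤₁` is the span of the
root vectors of height `1`.  Let `P` be a polynomial function on `𝔤` (written as `Q` in the
Killing-form coordinates `φ`), homogeneous of degree `m+1` and ad-invariant.  Let
`p, q ∈ ℕ`, `i₁,…,i_p ∈ {1,…,ℓ}` and `γ₁,…,γ_q ∈ Φ`.  If
`m + 1 − (p+q) + ∑ₐ |γₐ| < 0` or `∑ₐ |γₐ| > 0`, then for every `y ∈ 𝔥 ⊕ 𝔤₁` the
`(p+q)`-th differential of `P` at `y` satisfies
`d^{p+q}_y P(h_{i₁},…,h_{i_p}, e_{γ₁},…,e_{γ_q}) = 0`.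
The differential is encoded polynomially: if `R` is the polynomial in `p+q` variables
`t₁,…,t_{p+q}` with `R(t) = P(y + ∑ₐ tₐ vₐ)` (where `v = (h_{i₁},…,h_{i_p},e_{γ₁},…,e_{γ_q})`),
then `d^{p+q}_y P(v₁,…,v_{p+q})` is the coefficient of the monomial `t₁⋯t_{p+q}` in `R`. -/
theorem stmt7
    {g : Type} [LieRing g] [LieAlgebra ℂ g] [FiniteDimensional ℂ g]
    [LieAlgebra.IsSimple ℂ g]
    (ℓ : ℕ) (Φ : Type) [Fintype Φ] [DecidableEq Φ]
    (ht : Φ → ℤ) (negr : Φ → Φ)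
    (hnegr : ∀ γ, ht (negr γ) = -ht γ)
    (hht : ∀ γ, ht γ ≠ 0)
    (e : Φ → g) (hc : Fin ℓ → g)
    (b : Module.Basis (Fin ℓ ⊕ Φ) ℂ g) (hb : ∀ s, b s = Sum.elim hc e s)
    (φ : g →ₗ[ℂ] (Fin ℓ ⊕ Φ → ℂ))
    (hφ : ∀ (x : g) (s : Fin ℓ ⊕ Φ),
      φ x s = Sum.elim (fun i => killingForm ℂ g (hc i) x)
        (fun γ => killingForm ℂ g (e (negr γ)) x) s)
    (hφbij : Function.Bijective φ)
    (h₀ : g)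
    (hh₀e : ∀ γ, ⁅h₀, e γ⁆ = (ht γ : ℂ) • e γ)
    (hh₀h : ∀ i, ⁅h₀, hc i⁆ = 0)
    (m : ℕ) (P : g → ℂ) (Q : MvPolynomial (Fin ℓ ⊕ Φ) ℂ)
    (hP : ∀ x, P x = MvPolynomial.eval (φ x) Q)
    (hhom : Q.IsHomogeneous (m + 1))
    (hinv : ∀ x y : g,
      ∑ s : Fin ℓ ⊕ Φ,
        MvPolynomial.eval (φ x) (MvPolynomial.pderiv s Q) * φ ⁅y, x⁆ s = 0)
    (p q : ℕ) (idx : Fin p → Fin ℓ) (γs : Fin q → Φ)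
    (hcond : ((m : ℤ) + 1 - (p + q) + ∑ a : Fin q, ht (γs a) < 0) ∨
      (0 < ∑ a : Fin q, ht (γs a))) :
    ∀ y ∈ Submodule.span ℂ (Set.range hc) ⊔
        Submodule.span ℂ (e '' {γ | ht γ = 1}),
      ∀ R : MvPolynomial (Fin (p + q)) ℂ,
        (∀ t : Fin (p + q) → ℂ,
          P (y + ∑ a : Fin (p + q),
            t a • (Fin.append (fun c => hc (idx c)) (fun c => e (γs c)) a)) =
          MvPolynomial.eval t R) →
        MvPolynomial.coeff (∑ a : Fin (p + q), Finsupp.single a 1) R = 0 := by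
  classical
  intro y hy R hR
  -- the weight function on coordinates
  set w : Fin ℓ ⊕ Φ → ℤ := Sum.elim (fun _ => 0) ht with hw
  -- invariance of the Killing form
  have kinv : ∀ a b x : g, killingForm ℂ g ⁅a, b⁆ x = killingForm ℂ g a ⁅b, x⁆ :=
    fun a b x => LieModule.traceForm_apply_lie_apply ℂ g g a b x
  have fact1 : ∀ (i : Fin ℓ) (x : g), killingForm ℂ g (hc i) ⁅h₀, x⁆ = 0 := by
    intro i x
    rw [← kinv (hc i) h₀ x, ← lie_skew, hh₀h i, neg_zero, map_zero, LinearMap.zero_apply]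
  have fact2 : ∀ (γ : Φ) (x : g), killingForm ℂ g (e (negr γ)) ⁅h₀, x⁆
      = (ht γ : ℂ) * killingForm ℂ g (e (negr γ)) x := by
    intro γ x
    have h2 : ⁅e (negr γ), h₀⁆ = (ht γ : ℂ) • e (negr γ) := by
      rw [← lie_skew, hh₀e (negr γ), hnegr γ, ← neg_smul]
      push_cast
      ring_nf
    rw [← kinv (e (negr γ)) h₀ x, h2, map_smul, LinearMap.smul_apply, smul_eq_mul]
  -- φ intertwines ad h₀ with multiplication by the weight
  have φbr : ∀ (x : g) (s : Fin ℓ ⊕ Φ), φ ⁅h₀, x⁆ s = ((w s : ℤ) : ℂ) * φ x s := by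
    intro x s
    cases s with
    | inl i =>
      rw [hφ]
      simp only [Sum.elim_inl, hw]
      rw [fact1]
      simp
    | inr γ =>
      rw [hφ, hφ]
      simp only [Sum.elim_inr, hw]
      rw [fact2]
  -- every monomial of Q has weight zero
  have W0 : ∀ k : (Fin ℓ ⊕ Φ) →₀ ℕ, MvPolynomial.coeff k Q ≠ 0 →
      (∑ s : Fin ℓ ⊕ Φ, w s * (k s : ℤ)) = 0 := by
    intro k hk
    have hF : (∑ s : Fin ℓ ⊕ Φ, MvPolynomial.C ((w s : ℂ))
        * (MvPolynomial.X s * MvPolynomial.pderiv s Q)) = 0 := by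
      apply MvPolynomial.funext
      intro zv
      obtain ⟨x, rfl⟩ := hφbij.2 zv
      rw [map_sum, map_zero]
      have hterm : ∀ s : Fin ℓ ⊕ Φ, MvPolynomial.eval (φ x)
          (MvPolynomial.C ((w s : ℂ)) * (MvPolynomial.X s * MvPolynomial.pderiv s Q))
          = MvPolynomial.eval (φ x) (MvPolynomial.pderiv s Q) * φ ⁅h₀, x⁆ s := by
        intro s
        rw [φbr, map_mul, map_mul, MvPolynomial.eval_C, MvPolynomial.eval_X]
        ring
      rw [Finset.sum_congr rfl (fun s _ => hterm s)]
      exact hinv x h₀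
    have hXp : ∀ s : Fin ℓ ⊕ Φ, MvPolynomial.coeff k
        (MvPolynomial.X s * MvPolynomial.pderiv s Q) = (k s : ℂ) * MvPolynomial.coeff k Q := by
      intro s
      rw [MvPolynomial.coeff_X_mul']
      by_cases hks : s ∈ k.support
      · rw [if_pos hks, coeff_pderiv_aux]
        have hks1 : 1 ≤ k s := Nat.one_le_iff_ne_zero.mpr (Finsupp.mem_support_iff.mp hks)
        have h1 : k - Finsupp.single s 1 + Finsupp.single s 1 = k := by
          ext u
          by_cases hu : u = s
          · subst hu
            simp only [Finsupp.add_apply, Finsupp.tsub_apply, Finsupp.single_eq_same]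
            omega
          · simp [Finsupp.single_apply, Ne.symm hu]
        have h2 : ((k - Finsupp.single s 1 : ((Fin ℓ ⊕ Φ) →₀ ℕ))) s + 1 = k s := by
          simp only [Finsupp.tsub_apply, Finsupp.single_eq_same]
          omega
        rw [h1, h2]
      · rw [if_neg hks]
        have : k s = 0 := Finsupp.notMem_support_iff.mp hks
        rw [this]
        simp
    have hco := congrArg (MvPolynomial.coeff k) hF
    rw [MvPolynomial.coeff_sum, MvPolynomial.coeff_zero] at hco
    have hco2 : (∑ s : Fin ℓ ⊕ Φ, ((w s : ℂ) * (k s : ℂ))) * MvPolynomial.coeff k Q = 0 := by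
      rw [Finset.sum_mul, ← hco]
      refine Finset.sum_congr rfl fun s _ => ?_
      rw [MvPolynomial.coeff_C_mul, hXp s]
      ring
    have hsum0 : (∑ s : Fin ℓ ⊕ Φ, ((w s : ℂ) * (k s : ℂ))) = 0 :=
      by
        rcases mul_eq_zero.mp hco2 with h | h
        · exact h
        · exact absurd h hk
    have : (((∑ s : Fin ℓ ⊕ Φ, w s * (k s : ℤ)) : ℤ) : ℂ) = 0 := by
      push_cast
      exact hsum0
    exact_mod_cast this
  -- every monomial of Q has total degree m + 1
  have DEG : ∀ k : (Fin ℓ ⊕ Φ) →₀ ℕ, MvPolynomial.coeff k Q ≠ 0 →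
      (∑ s : Fin ℓ ⊕ Φ, (k s : ℤ)) = (m : ℤ) + 1 := by
    intro k hk
    have h1 : Finsupp.weight 1 k = m + 1 := hhom hk
    have h2 : k.degree = m + 1 := by rw [Finsupp.degree_eq_weight_one]; exact h1
    have h3 : (∑ s : Fin ℓ ⊕ Φ, k s) = k.degree := by
      rw [Finsupp.degree]
      exact (Finset.sum_subset (Finset.subset_univ _)
        (fun s _ hs => Finsupp.notMem_support_iff.mp hs)).symm
    have h4 : (∑ s : Fin ℓ ⊕ Φ, k s) = m + 1 := by rw [h3, h2]
    exact_mod_cast h4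
  -- support of φ (hc i) and φ (e γ)
  have sB1 : ∀ (i : Fin ℓ) (s : Fin ℓ ⊕ Φ), φ (hc i) s ≠ 0 → w s = 0 := by
    intro i s hne
    cases s with
    | inl i' => simp [hw]
    | inr γ' =>
      exfalso
      apply hne
      rw [hφ]
      simp only [Sum.elim_inr]
      have h1 := fact2 γ' (hc i)
      rw [hh₀h i, map_zero] at h1
      have hcast : ((ht γ' : ℤ) : ℂ) ≠ 0 := Int.cast_ne_zero.mpr (hht γ')
      exact (mul_eq_zero.mp h1.symm).resolve_left hcast
  have sB2 : ∀ (γ : Φ) (s : Fin ℓ ⊕ Φ), φ (e γ) s ≠ 0 → w s = ht γ := by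
    intro γ s hne
    cases s with
    | inl i =>
      exfalso
      apply hne
      rw [hφ]
      simp only [Sum.elim_inl]
      have h1 := fact1 i (e γ)
      rw [hh₀e γ, map_smul, smul_eq_mul] at h1
      have hcast : ((ht γ : ℤ) : ℂ) ≠ 0 := Int.cast_ne_zero.mpr (hht γ)
      exact (mul_eq_zero.mp h1).resolve_left hcast
    | inr γ' =>
      simp only [hw, Sum.elim_inr]
      by_contra hne'
      apply hne
      rw [hφ]
      simp only [Sum.elim_inr]
      have h1 := fact2 γ' (e γ)
      rw [hh₀e γ, map_smul, smul_eq_mul] at h1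
      have hcast : ((ht γ : ℤ) : ℂ) - ((ht γ' : ℤ) : ℂ) ≠ 0 := by
        rw [sub_ne_zero]
        exact fun hcc => hne' (by exact_mod_cast hcc.symm)
      have : (((ht γ : ℤ) : ℂ) - ((ht γ' : ℤ) : ℂ))
          * killingForm ℂ g (e (negr γ')) (e γ) = 0 := by
        rw [sub_mul, h1]
        ring
      exact (mul_eq_zero.mp this).resolve_left hcast
  -- support of φ y
  have sz : ∀ s : Fin ℓ ⊕ Φ, φ y s ≠ 0 → w s = 0 ∨ w s = 1 := by
    intro s hne
    by_contra hcon
    push_neg at hcon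
    obtain ⟨hno0, hno1⟩ := hcon
    apply hne
    obtain ⟨y₁, hy₁, y₂, hy₂, rfl⟩ := Submodule.mem_sup.mp hy
    set ψ : g →ₗ[ℂ] ℂ := (LinearMap.proj s).comp φ with hψ
    have hz1 : ψ y₁ = 0 := by
      have : Submodule.span ℂ (Set.range hc) ≤ LinearMap.ker ψ := by
        rw [Submodule.span_le]
        rintro _ ⟨i, rfl⟩
        simp only [SetLike.mem_coe, LinearMap.mem_ker, hψ, LinearMap.coe_comp,
          Function.comp_apply, LinearMap.proj_apply]
        by_contra hne2
        exact hno0 (sB1 i s hne2)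
      exact this hy₁
    have hz2 : ψ y₂ = 0 := by
      have : Submodule.span ℂ (e '' {γ | ht γ = 1}) ≤ LinearMap.ker ψ := by
        rw [Submodule.span_le]
        rintro _ ⟨γ, hγ, rfl⟩
        simp only [SetLike.mem_coe, LinearMap.mem_ker, hψ, LinearMap.coe_comp,
          Function.comp_apply, LinearMap.proj_apply]
        by_contra hne2
        have := sB2 γ s hne2
        rw [Set.mem_setOf_eq.mp hγ] at this
        exact hno1 this
      exact this hy₂
    have : φ (y₁ + y₂) s = ψ y₁ + ψ y₂ := by
      rw [map_add]
      rfl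
    rw [this, hz1, hz2, add_zero]
  -- the direction vectors and their weights
  set v : Fin (p + q) → g := Fin.append (fun c => hc (idx c)) (fun c => e (γs c)) with hv
  set cc : Fin (p + q) → ℤ := Fin.append (fun _ => (0 : ℤ)) (fun a => ht (γs a)) with hcc
  have hBc : ∀ (a : Fin (p + q)) (s : Fin ℓ ⊕ Φ), φ (v a) s ≠ 0 → w s = cc a := by
    intro a
    refine Fin.addCases (motive := fun a => ∀ s : Fin ℓ ⊕ Φ, φ (v a) s ≠ 0 → w s = cc a)
      ?_ ?_ a
    · intro i s hne
      rw [hv] at hne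
      rw [Fin.append_left] at hne
      rw [hcc, Fin.append_left]
      exact sB1 (idx i) s hne
    · intro i s hne
      rw [hv] at hne
      rw [Fin.append_right] at hne
      rw [hcc, Fin.append_right]
      exact sB2 (γs i) s hne
  have hcsum : (∑ a : Fin (p + q), cc a) = ∑ a : Fin q, ht (γs a) := by
    rw [Fin.sum_univ_add]
    simp [hcc, Fin.append_left, Fin.append_right]
  -- identify R with the substituted polynomial
  set A : (Fin ℓ ⊕ Φ) → MvPolynomial (Fin (p + q)) ℂ := fun s =>
    MvPolynomial.C (φ y s)
      + ∑ a : Fin (p + q), MvPolynomial.C (φ (v a) s) * MvPolynomial.X a with hA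
  have hReq : R = MvPolynomial.aeval A Q := by
    apply MvPolynomial.funext
    intro t
    rw [← hR t, hP, eval_aeval_apply]
    have harg : (fun s => MvPolynomial.eval t (A s))
        = φ (y + ∑ a : Fin (p + q), t a • v a) := by
      funext s
      rw [hA]
      simp only [map_add, map_sum, map_smul, map_mul, MvPolynomial.eval_C, MvPolynomial.eval_X,
        Pi.add_apply, Finset.sum_apply, Pi.smul_apply, smul_eq_mul]
      congr 1
      exact Finset.sum_congr rfl fun a _ => mul_comm _ _
    rw [harg]
  -- extract the coefficient using iterated derivatives
  set L : List (Fin (p + q)) := (Finset.univ : Finset (Fin (p + q))).toList with hL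
  have hLsum : ((L.map (fun a => Finsupp.single a (1 : ℕ))).sum : (Fin (p + q)) →₀ ℕ)
      = ∑ a : Fin (p + q), Finsupp.single a 1 := Finset.sum_map_toList _ _
  have hLc : ((L.map cc).sum : ℤ) = ∑ a : Fin q, ht (γs a) := by
    rw [Finset.sum_map_toList, hcsum]
  have hLlen : L.length = p + q := by
    rw [hL, Finset.length_toList, Finset.card_univ, Fintype.card_fin]
  have hkey : MvPolynomial.coeff (∑ a : Fin (p + q), Finsupp.single a 1)
      (MvPolynomial.aeval A Q)
      = MvPolynomial.eval (0 : Fin (p + q) → ℂ) (DL L (MvPolynomial.aeval A Q)) := by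
    rw [eval_zero_eq_coeff_zero,
      coeff_DL L (Finset.nodup_toList _) _ 0 (fun i _ => rfl), zero_add, hLsum]
  rw [hReq, hkey]
  refine main_vanish w (φ y) (fun a s => φ (v a) s) cc sz hBc L Q ((m : ℤ) + 1) 0
    (fun k hk => ⟨DEG k hk, W0 k hk⟩) ?_
  rw [hLc, hLlen]
  rcases hcond with h | h
  · right
    push_cast at h ⊢
    linarith
  · left
    linarith

end PeriodicFullKostantToda
end

section
/- If P is an ad-invariant polynomial function on 𝔤 and Y ∈ 𝔤_{>0}, then the gradient ∇_Y P of P at Y with respect to the Killing form lies in 𝔤_{≥0}; equivalently, ⟨∇_Y P, Z⟩ = 0 for every Z ∈ 𝔤_{>0}. -/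
namespace PeriodicFullKostantToda

lemma chainRule {σ : Type} [Fintype σ] [DecidableEq σ] (v : σ → Polynomial ℂ)
    (Q : MvPolynomial σ ℂ) :
    Polynomial.derivative (MvPolynomial.aeval v Q) =
      ∑ s : σ, MvPolynomial.aeval v (MvPolynomial.pderiv s Q) *
        Polynomial.derivative (v s) := by
  induction Q using MvPolynomial.induction_on with
  | C a => simp
  | add p q hp hq =>
      simp only [map_add, hp, hq, ← Finset.sum_add_distrib, add_mul]
  | mul_X p n hp =>
      have hterm : ∀ s : σ,
          MvPolynomial.aeval v (MvPolynomial.pderiv s (p * MvPolynomial.X n)) =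
            MvPolynomial.aeval v (MvPolynomial.pderiv s p) * v n
              + (if s = n then MvPolynomial.aeval v p else 0) := by
        intro s
        by_cases hs : s = n
        · subst hs
          rw [Derivation.leibniz, MvPolynomial.pderiv_X_self, smul_eq_mul, smul_eq_mul,
            mul_one, map_add, map_mul, MvPolynomial.aeval_X, if_pos rfl]
          ring
        · rw [Derivation.leibniz, MvPolynomial.pderiv_X_of_ne (fun h => hs h.symm),
            smul_zero, zero_add, smul_eq_mul, map_mul, MvPolynomial.aeval_X, if_neg hs,
            add_zero]
          ring
      simp only [map_mul, MvPolynomial.aeval_X, Polynomial.derivative_mul, hp, hterm,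
        add_mul, Finset.sum_add_distrib, Finset.sum_mul, ite_mul, zero_mul,
        Finset.sum_ite_eq', Finset.mem_univ, if_true]
      refine congrArg (· + _) ?_
      exact Finset.sum_congr rfl fun s _ => by ring

lemma evalAeval {σ : Type} (v : σ → Polynomial ℂ) (Q : MvPolynomial σ ℂ) (c : ℂ) :
    Polynomial.eval c (MvPolynomial.aeval v Q) =
      MvPolynomial.eval (fun s => Polynomial.eval c (v s)) Q := by
  induction Q using MvPolynomial.induction_on with
  | C a => simp
  | add p q hp hq => simp [hp, hq]
  | mul_X p n hp => simp [hp]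

/-- Context: `𝔤` a finite-dimensional complex simple Lie algebra of rank `ℓ`, with simple
coroots `h₁,…,h_ℓ`, root system `Φ` with height function `ht`, root negation `negr`, and
root vectors `e_γ`; `𝔤_{>0}` is the span of the root vectors of positive height.  If `P` is
an ad-invariant polynomial function on `𝔤` (written as `Q` in the Killing-form coordinates
`φ`) and `Y ∈ 𝔤_{>0}`, then the gradient `∇_Y P` of `P` at `Y` with respect to the Killing
form lies in `𝔤_{≥0}`; equivalently, `⟨∇_Y P, Z⟩ = d_Y P(Z) = 0` for every `Z ∈ 𝔤_{>0}`.
The directional derivative `d_Y P(Z)` is encoded polynomially: it is the coefficient of `t`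
in the one-variable polynomial `S` with `S(t) = P(Y + t Z)`. -/
theorem stmt8
    {g : Type} [LieRing g] [LieAlgebra ℂ g] [FiniteDimensional ℂ g]
    [LieAlgebra.IsSimple ℂ g]
    (ℓ : ℕ) (Φ : Type) [Fintype Φ] [DecidableEq Φ]
    (ht : Φ → ℤ) (negr : Φ → Φ)
    (hnegr : ∀ γ, ht (negr γ) = -ht γ)
    (hht : ∀ γ, ht γ ≠ 0)
    (e : Φ → g) (hc : Fin ℓ → g)
    (b : Module.Basis (Fin ℓ ⊕ Φ) ℂ g) (hb : ∀ s, b s = Sum.elim hc e s)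
    (φ : g →ₗ[ℂ] (Fin ℓ ⊕ Φ → ℂ))
    (hφ : ∀ (x : g) (s : Fin ℓ ⊕ Φ),
      φ x s = Sum.elim (fun i => killingForm ℂ g (hc i) x)
        (fun γ => killingForm ℂ g (e (negr γ)) x) s)
    (hφbij : Function.Bijective φ)
    (h₀ : g)
    (hh₀e : ∀ γ, ⁅h₀, e γ⁆ = (ht γ : ℂ) • e γ)
    (hh₀h : ∀ i, ⁅h₀, hc i⁆ = 0)
    (P : g → ℂ) (Q : MvPolynomial (Fin ℓ ⊕ Φ) ℂ)
    (hP : ∀ x, P x = MvPolynomial.eval (φ x) Q)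
    (hinv : ∀ x y : g,
      ∑ s : Fin ℓ ⊕ Φ,
        MvPolynomial.eval (φ x) (MvPolynomial.pderiv s Q) * φ ⁅y, x⁆ s = 0)
    (Y : g) (hY : Y ∈ Submodule.span ℂ (e '' {γ | 0 < ht γ})) :
    ∀ Z ∈ Submodule.span ℂ (e '' {γ | 0 < ht γ}),
      ∀ S : Polynomial ℂ, (∀ t : ℂ, P (Y + t • Z) = S.eval t) → S.coeff 1 = 0 := by
  have key : ∀ x ∈ Submodule.span ℂ (e '' {γ | 0 < ht γ}), P x = P 0 := by
    intro x hx
    obtain ⟨l, hl, hlx⟩ := (Finsupp.mem_span_image_iff_linearCombination ℂ).mp hx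
    set a : Φ → ℂ := fun γ => l γ with ha
    have ha0 : ∀ γ, ¬ 0 < ht γ → a γ = 0 := fun γ h =>
      Finsupp.notMem_support_iff.mp (fun hmem => h ((Finsupp.mem_supported ℂ l).mp hl hmem))
    have hx' : ∑ γ : Φ, a γ • e γ = x := by
      rw [← hlx, Finsupp.linearCombination_apply, Finsupp.sum_fintype]
      intro γ; simp
    set n : Φ → ℕ := fun γ => (ht γ).toNat with hn
    set u : ℂ → g := fun c => ∑ γ : Φ, (a γ * c ^ n γ) • e γ with hu
    set v : (Fin ℓ ⊕ Φ) → Polynomial ℂ :=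
      fun s => ∑ γ : Φ, Polynomial.C (a γ * φ (e γ) s) * Polynomial.X ^ n γ with hvdef
    have hu1 : u 1 = x := by
      rw [hu]; simp only [one_pow, mul_one]; exact hx'
    have hu0 : u 0 = 0 := by
      rw [hu]
      refine Finset.sum_eq_zero fun γ _ => ?_
      by_cases hγ : 0 < ht γ
      · have hnγ : n γ ≠ 0 := by rw [hn]; simpa using by omega
        simp [zero_pow hnγ]
      · simp [ha0 γ hγ]
    have hv : ∀ (c : ℂ) s, φ (u c) s = (v s).eval c := by
      intro c s
      rw [hu, hvdef]
      simp only [map_sum, map_smul, Finset.sum_apply, Pi.smul_apply, smul_eq_mul,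
        Polynomial.eval_finset_sum, Polynomial.eval_mul, Polynomial.eval_C,
        Polynomial.eval_pow, Polynomial.eval_X]
      exact Finset.sum_congr rfl fun γ _ => by ring
    have hbr : ∀ c : ℂ, ⁅h₀, u c⁆ = ∑ γ : Φ, (a γ * c ^ n γ * (ht γ : ℂ)) • e γ := by
      intro c
      rw [hu]
      have : ⁅h₀, ∑ γ : Φ, (a γ * c ^ n γ) • e γ⁆
          = LieAlgebra.ad ℂ g h₀ (∑ γ : Φ, (a γ * c ^ n γ) • e γ) := rfl
      rw [this, map_sum]
      refine Finset.sum_congr rfl fun γ _ => ?_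
      rw [map_smul, LieAlgebra.ad_apply, hh₀e, smul_smul]
    have hd : ∀ (c : ℂ) s, φ ⁅h₀, u c⁆ s = c * (Polynomial.derivative (v s)).eval c := by
      intro c s
      rw [hbr, hvdef]
      simp only [map_sum, map_smul, Finset.sum_apply, Pi.smul_apply, smul_eq_mul,
        Polynomial.derivative_sum, Polynomial.derivative_C_mul, Polynomial.derivative_X_pow,
        Polynomial.eval_finset_sum, Polynomial.eval_mul, Polynomial.eval_C,
        Polynomial.eval_pow, Polynomial.eval_X, Polynomial.eval_natCast, Finset.mul_sum]
      refine Finset.sum_congr rfl fun γ _ => ?_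
      by_cases haγ : a γ = 0
      · simp [haγ]
      · have hγ : 0 < ht γ := by
          by_contra h; exact haγ (ha0 γ h)
        have hnγ : (ht γ : ℂ) = (n γ : ℂ) := by
          rw [hn]; norm_cast; simp [Int.toNat_of_nonneg hγ.le]
        have hpos : 1 ≤ n γ := by rw [hn]; simpa using by omega
        have hpow : c ^ (n γ - 1) * c = c ^ n γ := by
          rw [← pow_succ, Nat.sub_add_cancel hpos]
        rw [hnγ, ← hpow]
        ring
    set R : Polynomial ℂ := MvPolynomial.aeval v Q with hR
    have hPR : ∀ c : ℂ, P (u c) = R.eval c := by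
      intro c
      rw [hP, hR, evalAeval]
      have : φ (u c) = fun s => (v s).eval c := funext (hv c)
      rw [this]
    have hder : ∀ c : ℂ, c * (Polynomial.derivative R).eval c = 0 := by
      intro c
      have h1 := hinv (u c) h₀
      have h2 : ∀ s, MvPolynomial.eval (φ (u c)) (MvPolynomial.pderiv s Q) =
          (MvPolynomial.aeval v (MvPolynomial.pderiv s Q)).eval c := by
        intro s
        rw [evalAeval]
        have : φ (u c) = fun s' => (v s').eval c := funext (hv c)
        rw [this]
      rw [hR, chainRule]
      simp only [Polynomial.eval_finset_sum, Polynomial.eval_mul]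
      rw [Finset.mul_sum, ← h1]
      refine Finset.sum_congr rfl fun s _ => ?_
      rw [h2 s, hd c s]
      ring
    have hdR : Polynomial.derivative R = 0 := by
      have hXdR : Polynomial.X * Polynomial.derivative R = 0 :=
        Polynomial.funext fun c => by simpa using hder c
      rcases mul_eq_zero.mp hXdR with h | h
      · exact absurd h Polynomial.X_ne_zero
      · exact h
    have hRC : R = Polynomial.C (R.coeff 0) := Polynomial.eq_C_of_derivative_eq_zero hdR
    calc P x = P (u 1) := by rw [hu1]
      _ = R.eval 1 := hPR 1
      _ = R.eval 0 := by rw [hRC]; simp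
      _ = P (u 0) := (hPR 0).symm
      _ = P 0 := by rw [hu0]
  intro Z hZ S hS
  have h1 : ∀ t : ℂ, S.eval t = P 0 := fun t => by
    rw [← hS t]
    exact key (Y + t • Z) (Submodule.add_mem _ hY (Submodule.smul_mem _ _ hZ))
  have hSC : S = Polynomial.C (P 0) := Polynomial.funext fun t => by simp [h1 t]
  rw [hSC, Polynomial.coeff_C]
  simp

end PeriodicFullKostantToda
end
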